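/- Let p ∉ {0, −1} and m be real constants, and let a, b : (0,∞) × (0,∞) → ℝ be continuously differentiable with a(x,y) ≠ 0 everywhere, satisfying for all x, y > 0: a_y(x,y)/a(x,y) = −3/y and (1−p)·a_x(x,y) − (1+p)·b_y(x,y) = p·a(x,y)·(1/x − m·y). Then there exist a differentiable function f : (0,∞) → ℝ and a function g : (0,∞) → ℝ such that for all x, y > 0: a(x,y) = f(x)/y³ and b(x,y) = ((p−1)/(2(p+1)))·f'(x)/y² + (p/(p+1))·(1/(2xy) − m)·f(x)/y + g(x). -/

import Mathlib

/-- if `a(x,y) ≠ 0` satisfies `a_y/a = −3/y` and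
`(1−p)aₓ − (1+p)b_y = p·a·(1/x − my)` on `(0,∞)×(0,∞)` with `p ∉ {0,−1}`, then
`a(x,y) = f(x)/y³` and
`b(x,y) = ((p−1)/(2(p+1)))f'(x)/y² + (p/(p+1))(1/(2xy) − m)f(x)/y + g(x)`
for some differentiable `f` and some `g`. -/
lemma const_of_hasDerivAt_zero' {h : ℝ → ℝ}
    (hh : ∀ y ∈ Set.Ioi (0:ℝ), HasDerivAt h 0 y) {y : ℝ} (hy : y ∈ Set.Ioi (0:ℝ)) :
    h y = h 1 := by
  apply (convex_Ioi (0:ℝ)).is_const_of_fderivWithin_eq_zero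
    (fun z hz => (hh z hz).differentiableAt.differentiableWithinAt)
    ?_ hy (by norm_num : (1:ℝ) ∈ Set.Ioi (0:ℝ))
  intro z hz
  rw [fderivWithin_of_isOpen isOpen_Ioi hz]
  have := (hh z hz).hasFDerivAt.fderiv
  rw [this]; ext; simp

theorem stmt_19 (p m : ℝ) (hp0 : p ≠ 0) (hp1 : p ≠ -1)
    (a b : ℝ → ℝ → ℝ)
    (ha : ContDiffOn ℝ 1 (fun v : ℝ × ℝ => a v.1 v.2) (Set.Ioi 0 ×ˢ Set.Ioi 0))
    (hb : ContDiffOn ℝ 1 (fun v : ℝ × ℝ => b v.1 v.2) (Set.Ioi 0 ×ˢ Set.Ioi 0))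
    (ha0 : ∀ x > (0:ℝ), ∀ y > (0:ℝ), a x y ≠ 0)
    (heq1 : ∀ x > (0:ℝ), ∀ y > (0:ℝ), deriv (fun u => a x u) y / a x y = -3 / y)
    (heq2 : ∀ x > (0:ℝ), ∀ y > (0:ℝ),
      (1 - p) * deriv (fun u => a u y) x - (1 + p) * deriv (fun u => b x u) y
        = p * a x y * (1 / x - m * y)) :
    ∃ f g : ℝ → ℝ, (∀ x > (0:ℝ), DifferentiableAt ℝ f x) ∧
      ∀ x > (0:ℝ), ∀ y > (0:ℝ),
        a x y = f x / y ^ 3 ∧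
        b x y = ((p - 1) / (2 * (p + 1))) * deriv f x / y ^ 2
          + (p / (p + 1)) * (1 / (2 * x * y) - m) * f x / y + g x := by
  have hp1' : p + 1 ≠ 0 := fun h => hp1 (by linarith)
  have hopen : IsOpen (Set.Ioi (0:ℝ) ×ˢ Set.Ioi (0:ℝ)) := isOpen_Ioi.prod isOpen_Ioi
  -- differentiability of a and b at interior points
  have hadiff : ∀ x > (0:ℝ), ∀ y > (0:ℝ),
      DifferentiableAt ℝ (fun v : ℝ × ℝ => a v.1 v.2) (x, y) := fun x hx y hy =>
    (ha.differentiableOn one_ne_zero).differentiableAt (hopen.mem_nhds ⟨hx, hy⟩)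
  have hbdiff : ∀ x > (0:ℝ), ∀ y > (0:ℝ),
      DifferentiableAt ℝ (fun v : ℝ × ℝ => b v.1 v.2) (x, y) := fun x hx y hy =>
    (hb.differentiableOn one_ne_zero).differentiableAt (hopen.mem_nhds ⟨hx, hy⟩)
  have hay : ∀ x > (0:ℝ), ∀ y > (0:ℝ), DifferentiableAt ℝ (fun u => a x u) y := by
    intro x hx y hy
    exact (hadiff x hx y hy).comp y ((differentiableAt_const x).prodMk differentiableAt_id)
  have hby : ∀ x > (0:ℝ), ∀ y > (0:ℝ), DifferentiableAt ℝ (fun u => b x u) y := by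
    intro x hx y hy
    exact (hbdiff x hx y hy).comp y ((differentiableAt_const x).prodMk differentiableAt_id)
  -- the function f
  set f : ℝ → ℝ := fun x => a x 1 with hf
  have hfd : ∀ x > (0:ℝ), DifferentiableAt ℝ f x := by
    intro x hx
    exact (hadiff x hx 1 one_pos).comp x (differentiableAt_id.prodMk (differentiableAt_const (1:ℝ)) : DifferentiableAt ℝ (fun u : ℝ => (u, (1:ℝ))) x)
  -- a x y * y^3 is constant in y
  have key : ∀ x > (0:ℝ), ∀ y > (0:ℝ), a x y = f x / y ^ 3 := by
    intro x hx y hy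
    have hc : ∀ z ∈ Set.Ioi (0:ℝ), HasDerivAt (fun u => a x u * u ^ 3) 0 z := by
      intro z hz
      have hz0 : z ≠ 0 := ne_of_gt hz
      have haz : a x z ≠ 0 := ha0 x hx z hz
      have hda : deriv (fun u => a x u) z = -3 * a x z / z := by
        have h1 := heq1 x hx z hz
        rw [div_eq_div_iff haz hz0] at h1
        rw [eq_div_iff hz0]
        linarith [h1]
      have h2 : HasDerivAt (fun u => a x u) (-3 * a x z / z) z := by
        rw [← hda]; exact (hay x hx z hz).hasDerivAt
      have h3 : HasDerivAt (fun u : ℝ => u ^ 3) (3 * z ^ 2) z := by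
        simpa using hasDerivAt_pow 3 z
      have := h2.mul h3
      refine this.congr_deriv (Eq.symm ?_)
      field_simp
      ring
    have h1 := const_of_hasDerivAt_zero' hc (Set.mem_Ioi.2 hy)
    simp only [one_pow, mul_one] at h1
    rw [eq_div_iff (by positivity : (y:ℝ) ^ 3 ≠ 0)]
    exact h1
  -- deriv in x
  have hax : ∀ x > (0:ℝ), ∀ y > (0:ℝ),
      deriv (fun u => a u y) x = deriv f x / y ^ 3 := by
    intro x hx y hy
    have hev : (fun u => a u y) =ᶠ[nhds x] (fun u => f u / y ^ 3) := by
      filter_upwards [isOpen_Ioi.mem_nhds hx] with u hu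
      exact key u hu y hy
    rw [hev.deriv_eq, deriv_div_const]
  -- define g
  set g : ℝ → ℝ := fun x => b x 1 - (((p - 1) / (2 * (p + 1))) * deriv f x / 1 ^ 2
      + (p / (p + 1)) * (1 / (2 * x * 1) - m) * f x / 1) with hg
  refine ⟨f, g, hfd, ?_⟩
  intro x hx y hy
  refine ⟨key x hx y hy, ?_⟩
  set G : ℝ → ℝ := fun u => b x u - (((p - 1) / (2 * (p + 1))) * deriv f x / u ^ 2
      + (p / (p + 1)) * (1 / (2 * x * u) - m) * f x / u) with hG
  have hGd : ∀ z ∈ Set.Ioi (0:ℝ), HasDerivAt G 0 z := by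
    intro z hz
    have hz0 : z ≠ 0 := ne_of_gt hz
    have hx0 : x ≠ 0 := ne_of_gt hx
    -- derivative of b
    have hdb : HasDerivAt (fun u => b x u) (deriv (fun u => b x u) z) z :=
      (hby x hx z hz).hasDerivAt
    -- derivative of first term
    have ht1 : HasDerivAt (fun u : ℝ => ((p - 1) / (2 * (p + 1))) * deriv f x / u ^ 2)
        ((0 * z ^ 2 - ((p - 1) / (2 * (p + 1))) * deriv f x * (2 * z)) / (z ^ 2) ^ 2) z := by
      exact (hasDerivAt_const z _).div (by simpa using hasDerivAt_pow 2 z) (by positivity)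
    -- derivative of second term
    have hinner : HasDerivAt (fun u : ℝ => 1 / (2 * x * u))
        ((0 * (2 * x * z) - 1 * (2 * x)) / (2 * x * z) ^ 2) z := by
      refine (hasDerivAt_const z 1).div ?_ (by simp [hx0, hz0])
      simpa using (hasDerivAt_id z).const_mul (2 * x)
    have ht2 : HasDerivAt (fun u : ℝ => (p / (p + 1)) * (1 / (2 * x * u) - m) * f x / u)
        ((((p / (p + 1)) * ((0 * (2 * x * z) - 1 * (2 * x)) / (2 * x * z) ^ 2)) * f x * z
          - (p / (p + 1)) * (1 / (2 * x * z) - m) * f x * 1) / z ^ 2) z := by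
      exact (((hinner.sub_const m).const_mul (p / (p + 1))).mul_const (f x)).div
        (hasDerivAt_id z) hz0
    have hGd' := hdb.sub (ht1.add ht2)
    refine hGd'.congr_deriv (Eq.symm ?_)
    -- compute deriv b from heq2
    have h2 := heq2 x hx z hz
    rw [hax x hx z hz, key x hx z hz] at h2
    have hdbv : deriv (fun u => b x u) z
        = ((1 - p) * (deriv f x / z ^ 3) - p * (f x / z ^ 3) * (1 / x - m * z)) / (1 + p) := by
      have h1p : (1 + p) ≠ 0 := fun h => hp1 (by linarith)
      rw [eq_div_iff h1p]
      linarith [h2]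
    rw [hdbv]
    have h1p : (1 + p) ≠ 0 := fun h => hp1 (by linarith)
    field_simp
    ring
  have hc := const_of_hasDerivAt_zero' hGd (Set.mem_Ioi.2 hy)
  have : G y = g x := by rw [hc]
  rw [hG] at this
  simp only at this
  linarith [this]
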